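/- Let V be a real inner product space (with positive-definite inner product ⟨·,·⟩ and squared norm x² := ⟨x,x⟩), let y ∈ V with y ≠ 0, set b := y/‖y‖, let α ≠ 0 be a real number, and define η(x) := α(2⟨x,y⟩(⟨b,y⟩ − ⟨b,x⟩) + ⟨b,x⟩·y² − ⟨b,y⟩·x²). Then the first-order tube equation ⟨x,y⟩² − x²·y² = η(x)² has only the solutions x = 0 and x = y; that is, in a properly Euclidean Σ-space with world function Σ(x,x′) = α⟨b, x−x′⟩·‖x−x′‖² + ½‖x−x′‖² the neutral first-order tube through 0 and y degenerates to the set of its two basic points. -/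

import Mathlib

/-- in a properly Euclidean Σ-space with world function
`Σ(x,x′) = α⟨b, x−x′⟩‖x−x′‖² + ½‖x−x′‖²` (with `b = y/‖y‖`, `α ≠ 0`), the
neutral first-order tube equation `⟨x,y⟩² − x²y² = η(x)²` through the points
`0` and `y ≠ 0` has only the solutions `x = 0` and `x = y`: the tube
degenerates to the set of its two basic points. -/
theorem first_order_tube_degenerates_to_basic_points
    {V : Type*} [NormedAddCommGroup V] [InnerProductSpace ℝ V]
    (y : V) (hy : y ≠ 0) (α : ℝ) (hα : α ≠ 0)
    (b : V) (hb : b = ‖y‖⁻¹ • y)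
    (η : V → ℝ)
    (hη : ∀ x : V, η x = α * (2 * (inner ℝ x y : ℝ) *
        ((inner ℝ b y : ℝ) - (inner ℝ b x : ℝ))
      + (inner ℝ b x : ℝ) * (inner ℝ y y : ℝ)
      - (inner ℝ b y : ℝ) * (inner ℝ x x : ℝ))) :
    ∀ x : V,
      (inner ℝ x y : ℝ) ^ 2 - (inner ℝ x x : ℝ) * (inner ℝ y y : ℝ) = (η x) ^ 2 ↔
        x = 0 ∨ x = y := by
  have hs : (inner ℝ y y : ℝ) ≠ 0 := fun h => hy (inner_self_eq_zero.mp h)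
  have hn : ‖y‖ ≠ 0 := norm_ne_zero_iff.mpr hy
  intro x
  constructor
  · intro h
    -- Cauchy–Schwarz: LHS ≤ 0, RHS ≥ 0, so both are 0.
    have hcs : (inner ℝ x y : ℝ) * (inner ℝ x y : ℝ) ≤
        (inner ℝ x x : ℝ) * (inner ℝ y y : ℝ) := real_inner_mul_inner_self_le x y
    have hη0 : η x = 0 := by nlinarith [sq_nonneg (η x)]
    have heq : (inner ℝ x y : ℝ) ^ 2 = (inner ℝ x x : ℝ) * (inner ℝ y y : ℝ) := by
      rw [hη0] at h; nlinarith
    -- equality case of Cauchy–Schwarz: x = r • y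
    by_cases hx0 : x = 0
    · exact Or.inl hx0
    obtain ⟨r, hr0, hr⟩ : ∃ r : ℝ, r ≠ 0 ∧ x = r • y := by
      rw [← norm_inner_eq_norm_iff hy hx0]
      have h1 : (inner ℝ y y : ℝ) = ‖y‖ ^ 2 := real_inner_self_eq_norm_sq y
      have h2 : (inner ℝ x x : ℝ) = ‖x‖ ^ 2 := real_inner_self_eq_norm_sq x
      have h3 : (inner ℝ y x : ℝ) = (inner ℝ x y : ℝ) := real_inner_comm x y
      have hsq : (inner ℝ x y : ℝ) ^ 2 = (‖y‖ * ‖x‖) ^ 2 := by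
        rw [heq, h1, h2]; ring
      calc ‖(inner ℝ y x : ℝ)‖ = Real.sqrt ((inner ℝ x y : ℝ) ^ 2) := by
            rw [Real.sqrt_sq_eq_abs, h3, Real.norm_eq_abs]
        _ = ‖y‖ * ‖x‖ := by
            rw [hsq, Real.sqrt_sq (by positivity)]
    -- compute η on x = r • y
    have hη' := hη x
    rw [hη0, hr, hb] at hη'
    simp only [inner_smul_left, inner_smul_right, RCLike.inner_apply,
      conj_trivial, map_inv₀, RCLike.conj_ofReal] at hη'
    have key : α * (‖y‖⁻¹ * (inner ℝ y y : ℝ) ^ 2) * (3 * r * (1 - r)) = 0 := by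
      linear_combination -hη'
    have : r = 1 := by
      rcases mul_eq_zero.mp key with h' | h'
      · exact absurd h' (by
          refine mul_ne_zero hα (mul_ne_zero (inv_ne_zero hn) (pow_ne_zero _ hs)))
      · rcases mul_eq_zero.mp h' with h'' | h''
        · exact absurd h'' (by
            rcases mul_eq_zero.mp (by exact h'' : (3 : ℝ) * r = 0) with h3 | h3
            · norm_num at h3
            · exact absurd h3 hr0)
        · linarith
    right
    rw [hr, this, one_smul]
  · rintro (rfl | rfl) <;>
      simp only [hη, inner_zero_left, inner_zero_right, sub_self] <;> ring
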